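/- arXiv:2201.09276 — 8 statements merged into one kernel-verified Lean document; each statement's English description precedes it below -/
import Mathlib

section
/- Let R be a commutative local ring and A ∈ M₂(R). Then A is strongly rad-clean if and only if A ∈ GL₂(R), or A ∈ J(M₂(R)), or tr(A) ∈ U(R) and the quadratic equation x² + x = −det(A)/tr(A)² has a root in J(R). -/
/-- `j` lies in the Jacobson radical of the corner ring `eSe` (with identity `e`):
every element of the form `e - (eye)·j` is invertible in the corner ring. -/
def MemCornerJacobson {S : Type*} [Ring S] (e j : S) : Prop :=
  ∀ y : S, ∃ s : S,
    e * s * e = s ∧ s * (e - e * y * e * j) = e ∧ (e - e * y * e * j) * s = e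

/-- `a` is strongly rad-clean: `a = e + u` with `e` idempotent, `u` a unit,
`ae = ea` and `eae ∈ J(eSe)`. -/
def IsStronglyRadClean {S : Type*} [Ring S] (a : S) : Prop :=
  ∃ e : S, IsIdempotentElem e ∧ IsUnit (a - e) ∧ a * e = e * a ∧
    MemCornerJacobson e (e * a * e)

open Matrix

section Aux

variable {R : Type*} [CommRing R]

lemma ch2 (M : Matrix (Fin 2) (Fin 2) R) : M * M = M.trace • M - M.det • 1 := by
  ext i j
  fin_cases i <;> fin_cases j <;>
    simp [Matrix.mul_apply, Fin.sum_univ_two, Matrix.trace_fin_two, Matrix.det_fin_two,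
      Matrix.one_apply] <;> ring

lemma det_one_sub_smul (r : R) (M : Matrix (Fin 2) (Fin 2) R) :
    (1 - r • M).det = 1 - r * M.trace + r^2 * M.det := by
  simp [Matrix.det_fin_two, Matrix.trace_fin_two, Matrix.one_apply]; ring

lemma det_sub2 (A E : Matrix (Fin 2) (Fin 2) R) :
    (A - E).det = A.det + E.det - A.trace * E.trace + (A*E).trace := by
  simp [Matrix.det_fin_two, Matrix.trace_fin_two, Matrix.mul_apply, Fin.sum_univ_two]; ring

lemma idem_cases [IsLocalRing R] {e : R} (h : e * e = e) : e = 0 ∨ e = 1 := by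
  rcases IsLocalRing.isUnit_or_isUnit_one_sub_self e with hu | hu
  · right
    obtain ⟨u, rfl⟩ := hu
    have := congrArg (· * (↑u⁻¹ : R)) h
    simpa [mul_assoc] using this
  · left
    obtain ⟨v, hv⟩ : ∃ v, (1 - e) * v = 1 := ⟨↑hu.unit⁻¹, hu.mul_val_inv⟩
    have h0 : e * (1 - e) = 0 := by ring_nf; linear_combination -h
    calc e = e * ((1-e)*v) := by rw [hv, mul_one]
    _ = (e * (1-e)) * v := by ring
    _ = 0 := by rw [h0, zero_mul]

lemma unit_idem_eq_one {S : Type*} [Ring S] {e : S} (h : e * e = e) (hu : IsUnit e) :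
    e = 1 := by
  obtain ⟨v, hv⟩ : ∃ v, e * v = 1 := ⟨↑hu.unit⁻¹, hu.mul_val_inv⟩
  calc e = e * (e * v) := by rw [hv, mul_one]
  _ = (e * e) * v := by rw [mul_assoc]
  _ = 1 := by rw [h, hv]

theorem fwd [IsLocalRing R] (A : Matrix (Fin 2) (Fin 2) R) (h : IsStronglyRadClean A) :
      IsUnit A ∨ (∀ i j, A i j ∈ Ideal.jacobson (⊥ : Ideal R)) ∨
      (IsUnit A.trace ∧ ∃ x ∈ Ideal.jacobson (⊥ : Ideal R),
        A.trace ^ 2 * (x ^ 2 + x) = -A.det) := by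
  obtain ⟨E, hE2, hu, hcomm, hJ⟩ := h
  rw [IsIdempotentElem] at hE2
  have hdet2 : E.det * E.det = E.det := by rw [← Matrix.det_mul, hE2]
  rcases idem_cases hdet2 with hdE | hdE
  · -- det E = 0
    have h1E : (1 - E) * (1 - E) = 1 - E := by
      simp only [mul_sub, sub_mul, mul_one, one_mul, hE2]; abel
    have hdet2' : (1-E).det * (1-E).det = (1-E).det := by rw [← Matrix.det_mul, h1E]
    rcases idem_cases hdet2' with hd1E | hd1E
    · -- main case: nontrivial idempotent
      right; right
      have htrE : E.trace = 1 := by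
        have h0 : (1 - E).det = 1 - 1 * E.trace + 1^2 * E.det := by
          have := det_one_sub_smul 1 E
          rwa [one_smul] at this
        rw [hd1E, hdE] at h0
        linear_combination h0
      have hEA : E * A = A * E := hcomm.symm
      have hBE : (A*E) * E = A*E := by rw [mul_assoc, hE2]
      have hEB : E * (A*E) = A*E := by rw [← mul_assoc, hEA, hBE]
      have hEAE : E * A * E = A * E := by rw [hEA, hBE]
      have hdetB : (A*E).det = 0 := by rw [Matrix.det_mul, hdE, mul_zero]
      have hBB : (A*E) * (A*E) = (A*A) * E := by
        calc (A*E) * (A*E) = A * ((E*A) * E) := by simp only [mul_assoc]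
        _ = A * ((A*E) * E) := by rw [hEA]
        _ = A * (A * (E * E)) := by simp only [mul_assoc]
        _ = (A*A) * E := by rw [hE2, mul_assoc]
      have chB : (A*E) * (A*E) = (A*E).trace • (A*E) := by
        rw [ch2 (A*E), hdetB, zero_smul, sub_zero]
      have chA : (A*A) * E = A.trace • (A*E) - A.det • E := by
        rw [ch2 A, sub_mul, Matrix.smul_mul, Matrix.smul_mul, one_mul]
      have key : A.det • E = (A.trace - (A*E).trace) • (A*E) := by
        rw [sub_smul]
        rw [← chB, hBB, chA]
        abel
      have hd : A.det = (A.trace - (A*E).trace) * (A*E).trace := by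
        have := congrArg Matrix.trace key
        simpa [Matrix.trace_smul, htrE, smul_eq_mul] using this
      -- a := (A*E).trace ∈ J
      have haJ : (A*E).trace ∈ Ideal.jacobson (⊥ : Ideal R) := by
        rw [Ideal.mem_jacobson_bot]
        intro r
        obtain ⟨s, hs1, hs2, hs3⟩ := hJ ((-r) • 1)
        have hterm : E - E * ((-r) • 1) * E * (E * A * E) = E + r • (A*E) := by
          rw [Matrix.mul_smul, mul_one, Matrix.smul_mul, Matrix.smul_mul, hE2, hEAE,
            hEB, neg_smul, sub_neg_eq_add]
        rw [hterm] at hs2 hs3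
        have hsE : s * E = s := by
          calc s * E = (E*s*E) * E := by rw [hs1]
          _ = (E*s) * (E*E) := by simp only [mul_assoc]
          _ = E*s*E := by rw [hE2]
          _ = s := hs1
        have hEs : E * s = s := by
          calc E * s = E * (E*s*E) := by rw [hs1]
          _ = (E*E) * (s*E) := by simp only [mul_assoc]
          _ = E * (s*E) := by rw [hE2]
          _ = E*s*E := by rw [← mul_assoc]
          _ = s := hs1
        have h0l : (1 - E) * s = 0 := by rw [sub_mul, one_mul, hEs, sub_self]
        have h0r : s * (1 - E) = 0 := by rw [mul_sub, mul_one, hsE, sub_self]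
        have hun : IsUnit (1 + r • (A*E)) := by
          rw [isUnit_iff_exists]
          refine ⟨s + (1 - E), ?_, ?_⟩
          · have e1 : (1 + r • (A*E)) * (s + (1 - E)) =
                ((E + r • (A*E)) * s + ((1-E) * s)) + (1 - E) := by
              simp only [add_mul, mul_add, sub_mul, mul_sub, one_mul, mul_one,
                Matrix.smul_mul, Matrix.mul_smul, hBE, hEB]
              abel
            rw [e1, hs3, h0l, add_zero]
            abel
          · have e2 : (s + (1 - E)) * (1 + r • (A*E)) =
                (s * (E + r • (A*E)) + s * (1-E)) + (1 - E) := by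
              simp only [add_mul, mul_add, sub_mul, mul_sub, one_mul, mul_one,
                Matrix.smul_mul, Matrix.mul_smul, hBE, hEB]
              abel
            rw [e2, hs2, h0r, add_zero]
            abel
        have hdd := (Matrix.isUnit_iff_isUnit_det _).mp hun
        have hdval : (1 + r • (A*E)).det = 1 + r * (A*E).trace := by
          have h := det_one_sub_smul (-r) (A*E)
          rw [neg_smul, sub_neg_eq_add] at h
          rw [h, hdetB]; ring
        rw [hdval] at hdd
        have e : (A*E).trace * r + 1 = 1 + r * (A*E).trace := by ring
        rwa [e]
      have hdAE := (Matrix.isUnit_iff_isUnit_det _).mp hu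
      have hfact : (A - E).det = ((A*E).trace - 1) * (A.trace - (A*E).trace) := by
        rw [det_sub2, hdE, htrE]
        linear_combination hd
      rw [hfact] at hdAE
      have hba : IsUnit (A.trace - (A*E).trace) := isUnit_of_mul_isUnit_right hdAE
      obtain ⟨w, hw⟩ : ∃ w, (A.trace - (A*E).trace) * w = 1 := ⟨↑hba.unit⁻¹, hba.mul_val_inv⟩
      have htw : IsUnit (A.trace * w) := by
        have h1 := Ideal.mem_jacobson_bot.mp haJ w
        have e : A.trace * w = (A*E).trace * w + 1 := by linear_combination hw
        rw [e]; exact h1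
      have htu : IsUnit A.trace := isUnit_of_mul_isUnit_left htw
      refine ⟨htu, ?_⟩
      obtain ⟨c, hc⟩ : ∃ c, A.trace * c = 1 := ⟨↑htu.unit⁻¹, htu.mul_val_inv⟩
      refine ⟨-((A*E).trace * c), neg_mem (Ideal.mul_mem_right _ _ haJ), ?_⟩
      linear_combination (((A*E).trace)^2*(A.trace*c+1) - (A*E).trace*A.trace) * hc + hd
    · -- 1 - E unit hence E = 0
      left
      have : (1 : Matrix (Fin 2) (Fin 2) R) - E = 1 := by
        apply unit_idem_eq_one h1E
        rw [Matrix.isUnit_iff_isUnit_det, hd1E]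
        exact isUnit_one
      have hE0 : E = 0 := sub_eq_self.mp this
      rw [hE0, sub_zero] at hu
      exact hu
  · -- det E = 1, E = 1, A in J
    right; left
    have hE1 : E = 1 := by
      apply unit_idem_eq_one hE2
      rw [Matrix.isUnit_iff_isUnit_det, hdE]
      exact isUnit_one
    intro k l
    rw [Ideal.mem_jacobson_bot]
    intro r
    obtain ⟨s, hs1, hs2, hs3⟩ := hJ ((-r) • Matrix.single l k 1)
    rw [hE1] at hs2 hs3
    simp only [one_mul, mul_one] at hs2 hs3
    have hun : IsUnit (1 - (-r) • Matrix.single l k (1:R) * A) :=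
      isUnit_iff_exists.mpr ⟨s, hs3, hs2⟩
    have hdu := (Matrix.isUnit_iff_isUnit_det _).mp hun
    have hdval : (1 - (-r) • Matrix.single l k (1:R) * A).det = A k l * r + 1 := by
      fin_cases k <;> fin_cases l <;>
        simp [Matrix.det_fin_two, Matrix.mul_apply, Fin.sum_univ_two,
          Matrix.single, Matrix.one_apply] <;> ring
    rwa [hdval] at hdu

lemma isUnit_one_sub_J {a : R} (h : a ∈ Ideal.jacobson (⊥ : Ideal R)) : IsUnit (1 - a) := by
  have := Ideal.mem_jacobson_bot.mp h (-1)
  simpa [sub_eq_add_neg, add_comm] using this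

lemma isUnit_one_sub_matJ {M : Matrix (Fin 2) (Fin 2) R}
    (h : ∀ i j, M i j ∈ Ideal.jacobson (⊥ : Ideal R)) : IsUnit (1 - M) := by
  rw [Matrix.isUnit_iff_isUnit_det]
  have hd : (1 - M).det = 1 - (M 0 0 + M 1 1 - M 0 0 * M 1 1 + M 0 1 * M 1 0) := by
    simp [Matrix.det_fin_two, Matrix.one_apply]; ring
  rw [hd]
  exact isUnit_one_sub_J (add_mem (sub_mem (add_mem (h 0 0) (h 1 1))
    (Ideal.mul_mem_right _ _ (h 0 0))) (Ideal.mul_mem_right _ _ (h 0 1)))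


lemma bwd_case1 (A : Matrix (Fin 2) (Fin 2) R) (hA : IsUnit A) : IsStronglyRadClean A := by
  refine ⟨0, by simp [IsIdempotentElem], by simpa using hA, by simp, ?_⟩
  intro y
  exact ⟨0, by simp⟩

lemma bwd_case2 (A : Matrix (Fin 2) (Fin 2) R)
    (hA : ∀ i j, A i j ∈ Ideal.jacobson (⊥ : Ideal R)) : IsStronglyRadClean A := by
  have hA1 : IsUnit (A - 1) := by
    have := (isUnit_one_sub_matJ hA).neg
    simpa using this
  refine ⟨1, by simp [IsIdempotentElem], hA1, by simp, ?_⟩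
  intro y
  have hyA : ∀ i j, (y * A) i j ∈ Ideal.jacobson (⊥ : Ideal R) := by
    intro i j
    rw [Matrix.mul_apply]
    exact sum_mem fun k _ => Ideal.mul_mem_left _ _ (hA k j)
  obtain ⟨u, hu⟩ := isUnit_one_sub_matJ hyA
  refine ⟨↑u⁻¹, by simp, ?_, ?_⟩
  · have : (↑u⁻¹ : Matrix (Fin 2) (Fin 2) R) * (1 - y*A) = 1 := by
      rw [← hu]; exact u.inv_mul
    simpa [mul_assoc] using this
  · have : (1 - y*A) * (↑u⁻¹ : Matrix (Fin 2) (Fin 2) R) = 1 := by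
      rw [← hu]; exact u.mul_inv
    simpa [mul_assoc] using this

lemma bwd_case3 (A : Matrix (Fin 2) (Fin 2) R) (ht : IsUnit A.trace)
    (x : R) (hx : x ∈ Ideal.jacobson (⊥ : Ideal R))
    (heq : A.trace ^ 2 * (x ^ 2 + x) = -A.det) : IsStronglyRadClean A := by
  set t := A.trace with htdef
  set d := A.det with hddef
  set α : R := -(t * x) with hα
  set β : R := t * (1 + x) with hβ
  have hαJ : α ∈ Ideal.jacobson (⊥ : Ideal R) :=
    neg_mem (Ideal.mul_mem_left _ _ hx)
  have hβu : IsUnit β := by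
    refine ht.mul ?_
    have h1 := Ideal.mem_jacobson_bot.mp hx 1
    have e : x * 1 + 1 = 1 + x := by ring
    rwa [e] at h1
  have hδu : IsUnit (α - β) := by
    have h2 := Ideal.mem_jacobson_bot.mp hx 2
    have e2 : x * 2 + 1 = 1 + 2 * x := by ring
    rw [e2] at h2
    have e : α - β = -(t * (1 + 2 * x)) := by rw [hα, hβ]; ring
    rw [e]
    exact (ht.mul h2).neg
  obtain ⟨δu, hδ⟩ := hδu
  set c : R := ((δu⁻¹ : Rˣ) : R) with hcdef
  have hc : (α - β) * c = 1 := by rw [← hδ]; exact δu.mul_inv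
  have hCH : A * A = t • A - d • 1 := ch2 A
  set E : Matrix (Fin 2) (Fin 2) R := c • (A - β • 1) with hE
  have hprod : α * β = d := by linear_combination -heq
  have hE2 : E * E = E := by
    rw [hE]
    simp only [Matrix.smul_mul, Matrix.mul_smul, sub_mul, mul_sub, smul_smul, one_mul, mul_one,
      smul_sub, sub_smul]
    rw [hCH]
    match_scalars
    · linear_combination c * hc
    · linear_combination (c*t*x + (α-β)*c) * hc - c^2 * heq
  have hsum : α + β = t := by rw [hα, hβ]; ring
  have hAE : A * E = α • E := by
    rw [hE]
    simp only [Matrix.mul_smul, Matrix.smul_mul, mul_sub, sub_mul, mul_one, one_mul, smul_smul,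
      smul_sub, Matrix.smul_mul, Matrix.mul_smul]
    rw [hCH]
    match_scalars
    · linear_combination
    · linear_combination c * hprod
  have hcomm : A * E = E * A := by
    rw [hE]
    simp only [Matrix.mul_smul, Matrix.smul_mul, mul_sub, sub_mul, mul_one, one_mul]
  have hA2 : A = (α - β) • E + β • 1 := by
    have h1 : (α - β) • E = A - β • (1 : Matrix (Fin 2) (Fin 2) R) := by
      rw [hE, smul_smul, hc, one_smul]
    rw [h1]; abel
  have hEAE : E * A * E = α • E := by
    rw [← hcomm, mul_assoc, hE2, hAE]
  clear_value E
  have hα1u : IsUnit (α - 1) := by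
    have := (isUnit_one_sub_J hαJ).neg
    have e : -(1 - α) = α - 1 := by ring
    rwa [e] at this
  obtain ⟨ba, hba⟩ : ∃ ba, (α - 1) * ba = 1 := ⟨↑hα1u.unit⁻¹, hα1u.mul_val_inv⟩
  obtain ⟨bb, hbb⟩ : ∃ bb, β * bb = 1 := ⟨↑hβu.unit⁻¹, hβu.mul_val_inv⟩
  have hUnit : IsUnit (A - E) := by
    rw [isUnit_iff_exists]
    refine ⟨ba • E + bb • (1 - E), ?_, ?_⟩ <;>
    · rw [hA2]
      simp only [sub_mul, mul_sub, add_mul, mul_add, Matrix.smul_mul, Matrix.mul_smul,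
        smul_smul, mul_one, one_mul, smul_sub, sub_smul, hE2]
      match_scalars
      · linear_combination hba - hbb
      · linear_combination hbb
  refine ⟨E, hE2, hUnit, hcomm, ?_⟩
  intro y
  set N := E * y * E with hN
  have hNE : N * E = N := by rw [hN, mul_assoc (E*y) E E, hE2]
  have hEN : E * N = N := by
    rw [hN, ← mul_assoc, ← mul_assoc, hE2]
  have hterm : E - E * y * E * (E * A * E) = E - α • N := by
    rw [hEAE, Matrix.mul_smul, mul_assoc (E*y) E E, hE2, hN]
  have hNJ : ∀ i j, (α • N) i j ∈ Ideal.jacobson (⊥ : Ideal R) := by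
    intro i j
    rw [Matrix.smul_apply]
    exact Ideal.mul_mem_right _ _ hαJ
  obtain ⟨v, hv⟩ := isUnit_one_sub_matJ hNJ
  set V : Matrix (Fin 2) (Fin 2) R := ↑v⁻¹ with hVdef
  have hV1 : (1 - α • N) * V = 1 := by rw [hVdef, ← hv]; exact v.mul_inv
  have hV2 : V * (1 - α • N) = 1 := by rw [hVdef, ← hv]; exact v.inv_mul
  have hEcomm : E * (1 - α • N) = (1 - α • N) * E := by
    rw [mul_sub, sub_mul, mul_one, one_mul, Matrix.mul_smul, Matrix.smul_mul, hEN, hNE]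
  have hEV : E * V = V * E := by
    calc E * V = (V * (1 - α • N)) * (E * V) := by rw [hV2, one_mul]
      _ = V * ((1 - α • N) * E) * V := by simp only [mul_assoc]
      _ = V * (E * (1 - α • N)) * V := by rw [hEcomm]
      _ = (V * E) * ((1 - α • N) * V) := by simp only [mul_assoc]
      _ = V * E := by rw [hV1, mul_one]
  have hfac1 : E - α • N = (1 - α • N) * E := by
    rw [sub_mul, one_mul, Matrix.smul_mul, hNE]
  have hfac2 : E - α • N = E * (1 - α • N) := by
    rw [mul_sub, mul_one, Matrix.mul_smul, hEN]
  refine ⟨E * V, ?_, ?_, ?_⟩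
  · calc E * (E * V) * E = (E * E) * (V * E) := by simp only [mul_assoc]
      _ = (E * E) * (E * V) := by rw [hEV]
      _ = E * (E * V) := by rw [hE2]
      _ = (E * E) * V := by simp only [mul_assoc]
      _ = E * V := by rw [hE2]
  · rw [hterm, hfac1]
    calc (E * V) * ((1 - α • N) * E) = E * (V * (1 - α • N)) * E := by simp only [mul_assoc]
      _ = E * E := by rw [hV2, mul_one]
      _ = E := hE2
  · rw [hterm, hfac2]
    calc (E * (1 - α • N)) * (E * V) = ((E * (1 - α • N)) * E) * V := by simp only [mul_assoc]
      _ = (E * ((1 - α • N) * E)) * V := by simp only [mul_assoc]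
      _ = (E * (E * (1 - α • N))) * V := by rw [hEcomm]
      _ = (E * E) * ((1 - α • N) * V) := by simp only [mul_assoc]
      _ = (E * E) * 1 := by rw [hV1]
      _ = E := by rw [mul_one, hE2]
  

end Aux

theorem stmt4 {R : Type*} [CommRing R] [IsLocalRing R] (A : Matrix (Fin 2) (Fin 2) R) :
    IsStronglyRadClean A ↔
      IsUnit A ∨ (∀ i j, A i j ∈ Ideal.jacobson (⊥ : Ideal R)) ∨
      (IsUnit A.trace ∧ ∃ x ∈ Ideal.jacobson (⊥ : Ideal R),
        A.trace ^ 2 * (x ^ 2 + x) = -A.det) := by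
  constructor
  · exact fwd A
  · rintro (h | h | ⟨ht, x, hx, heq⟩)
    · exact bwd_case1 A h
    · exact bwd_case2 A h
    · exact bwd_case3 A ht x hx heq
end

section
/- Let R be a commutative local ring and A ∈ M₂(R). Then A is strongly clean if and only if I₂ − A ∈ GL₂(R) or A is strongly rad-clean. -/
/-- `a` is strongly clean. -/
def IsStronglyClean {S : Type*} [Ring S] (a : S) : Prop :=
  ∃ e : S, IsIdempotentElem e ∧ IsUnit (a - e) ∧ a * e = e * a

section Aux

open Matrix IsLocalRing

variable {R : Type*} [CommRing R]

private lemma corner_smul (e x : Matrix (Fin 2) (Fin 2) R)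
    (h1 : e 0 0 + e 1 1 = 1) (h2 : e 0 0 * e 1 1 = e 0 1 * e 1 0) :
    e * x * e = (e * x * e).trace • e := by
  have hd : e 1 1 = 1 - e 0 0 := by linear_combination h1
  have hg : e 0 1 * e 1 0 = e 0 0 * (1 - e 0 0) := by linear_combination -h2 + e 0 0 * h1
  ext i j
  fin_cases i <;> fin_cases j <;>
    simp only [Matrix.mul_apply, Matrix.trace, Matrix.diag, Fin.sum_univ_two,
      Matrix.smul_apply, smul_eq_mul, Fin.isValue, Fin.mk_zero, Fin.mk_one]
  · rw [hd]; linear_combination (-(e 0 0 * x 0 0) + (1 - e 0 0) * x 1 1) * hg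
  · rw [hd]; linear_combination (-(e 0 1 * x 0 0) - x 0 1 - e 0 1 * x 1 1) * hg
  · rw [hd]; linear_combination (-(e 1 0 * x 0 0) - x 1 0 - e 1 0 * x 1 1) * hg
  · rw [hd]; linear_combination (e 0 0 * x 0 0 - (1 - e 0 0) * x 1 1) * hg

private lemma idem_facts [IsLocalRing R] (e : Matrix (Fin 2) (Fin 2) R) (he : e * e = e)
    (h0 : e ≠ 0) (h1 : e ≠ 1) :
    e 0 0 + e 1 1 = 1 ∧ e 0 0 * e 1 1 = e 0 1 * e 1 0 := by
  have ha : e 0 0 * e 0 0 + e 0 1 * e 1 0 = e 0 0 := by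
    have := congrFun (congrFun he 0) 0
    simpa [Matrix.mul_apply, Fin.sum_univ_two] using this
  have hb : e 0 0 * e 0 1 + e 0 1 * e 1 1 = e 0 1 := by
    have := congrFun (congrFun he 0) 1
    simpa [Matrix.mul_apply, Fin.sum_univ_two] using this
  have hc : e 1 0 * e 0 0 + e 1 1 * e 1 0 = e 1 0 := by
    have := congrFun (congrFun he 1) 0
    simpa [Matrix.mul_apply, Fin.sum_univ_two] using this
  have hd : e 1 0 * e 0 1 + e 1 1 * e 1 1 = e 1 1 := by
    have := congrFun (congrFun he 1) 1
    simpa [Matrix.mul_apply, Fin.sum_univ_two] using this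
  have hdet : e 0 0 * e 1 1 = e 0 1 * e 1 0 := by
    have hDD : e.det * e.det = e.det := by rw [← Matrix.det_mul, he]
    rcases isUnit_or_isUnit_one_sub_self e.det with hu | hu
    · exfalso
      have heu : IsUnit e := (Matrix.isUnit_iff_isUnit_det e).mpr hu
      exact h1 (heu.mul_left_cancel (show e * e = e * 1 by rw [mul_one]; exact he))
    · have : e.det * (1 - e.det) = 0 := by linear_combination -hDD
      have hz : e.det = 0 := by
        have := hu.mul_left_cancel (a := (1 - e.det)) (b := e.det) (c := 0)
          (by rw [mul_zero, mul_comm]; exact this)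
        exact this
      have : e 0 0 * e 1 1 - e 0 1 * e 1 0 = 0 := by
        rw [← Matrix.det_fin_two]; exact hz
      linear_combination this
  set t := e 0 0 + e 1 1 - 1 with ht
  have hta : t * e 0 0 = 0 := by rw [ht]; linear_combination ha + hdet
  have htb : t * e 0 1 = 0 := by rw [ht]; linear_combination hb
  have htc : t * e 1 0 = 0 := by rw [ht]; linear_combination hc
  have htd : t * e 1 1 = 0 := by rw [ht]; linear_combination hd + hdet
  have htnu : ¬ IsUnit t := by
    intro hu
    apply h0
    ext i j
    fin_cases i <;> fin_cases j <;>
      simp only [Matrix.zero_apply, Fin.mk_zero, Fin.mk_one, Fin.isValue]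
    · exact hu.mul_left_cancel (by rw [mul_zero]; exact hta)
    · exact hu.mul_left_cancel (by rw [mul_zero]; exact htb)
    · exact hu.mul_left_cancel (by rw [mul_zero]; exact htc)
    · exact hu.mul_left_cancel (by rw [mul_zero]; exact htd)
  have htrace : IsUnit (e 0 0 + e 1 1) := by
    have h' : e 0 0 + e 1 1 = 1 - (-t) := by rw [ht]; ring
    rw [h']
    exact isUnit_one_sub_self_of_mem_nonunits _ (by
      simp only [mem_nonunits_iff, IsUnit.neg_iff]; exact htnu)
  have ht0 : t = 0 := by
    rcases isUnit_or_isUnit_of_isUnit_add htrace with hu | hu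
    · exact hu.mul_right_cancel (by rw [zero_mul]; exact hta)
    · exact hu.mul_right_cancel (by rw [zero_mul]; exact htd)
  exact ⟨by linear_combination ht0, hdet⟩

private lemma isUnit_of_corner (A e : Matrix (Fin 2) (Fin 2) R) (he : e * e = e)
    (hc : A * e = e * A) (hu : IsUnit (A - e)) (τ : R) (hτ : IsUnit τ)
    (hAe : e * A * e = τ • e) : IsUnit A := by
  obtain ⟨u, hu'⟩ := hu
  obtain ⟨σ, hσ⟩ := hτ
  set U : Matrix (Fin 2) (Fin 2) R := ↑u with hUdef
  set v : Matrix (Fin 2) (Fin 2) R := ↑u⁻¹ with hv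
  have huv : U * v = 1 := u.mul_inv
  have hvu : v * U = 1 := u.inv_mul
  have hA : A = U + e := by rw [hu']; abel
  have hF1 : A * e = τ • e := by
    calc A * e = A * (e * e) := by rw [he]
    _ = (A * e) * e := by rw [mul_assoc]
    _ = (e * A) * e := by rw [hc]
    _ = τ • e := hAe
  have hστ : (↑σ⁻¹ : R) * τ = 1 := by rw [← hσ]; exact σ.inv_mul
  have hue : U * e = e * U := by
    rw [hu', sub_mul, mul_sub, hc]
  have hev : v * e = e * v := by
    have h' : (e * U) * v = e := by rw [mul_assoc, huv, mul_one]
    calc v * e = v * ((e * U) * v) := by rw [h']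
    _ = v * ((U * e) * v) := by rw [hue]
    _ = (v * U) * (e * v) := by noncomm_ring
    _ = e * v := by rw [hvu, one_mul]
  have heve : e * v * e = e * v := by rw [mul_assoc, hev, ← mul_assoc, he]
  have hA1e : A * (1 - e) = U * (1 - e) := by
    rw [hA]
    calc (U + e) * (1 - e) = U * (1 - e) + (e - e * e) := by noncomm_ring
    _ = U * (1 - e) := by rw [he, sub_self, add_zero]
  refine isUnit_iff_exists.mpr ⟨(↑σ⁻¹ : R) • e + v * (1 - e), ?_, ?_⟩
  · have t1 : A * ((↑σ⁻¹ : R) • e) = e := by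
      rw [mul_smul_comm, hF1, smul_smul, hστ, one_smul]
    have hAv : A * v = 1 + e * v := by rw [hA, add_mul, huv]
    have t2 : A * (v * (1 - e)) = 1 - e := by
      rw [← mul_assoc, hAv]
      calc (1 + e * v) * (1 - e) = 1 - e + (e * v - e * v * e) := by noncomm_ring
      _ = 1 - e := by rw [heve, sub_self, add_zero]
    rw [mul_add, t1, t2]; abel
  · have t1 : ((↑σ⁻¹ : R) • e) * A = e := by
      rw [smul_mul_assoc, ← hc, hF1, smul_smul, hστ, one_smul]
    have h1eA : (1 - e) * A = A * (1 - e) := by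
      rw [mul_sub, sub_mul, hc, mul_one, one_mul]
    have t2 : v * (1 - e) * A = 1 - e := by
      rw [mul_assoc, h1eA, hA1e, ← mul_assoc, hvu, one_mul]
    rw [add_mul, t1, t2]; abel

private lemma radClean_of_isUnit {S : Type*} [Ring S] (a : S) (h : IsUnit a) :
    IsStronglyRadClean a := by
  refine ⟨0, ?_, by simpa using h, by simp, fun y => ⟨0, by simp⟩⟩
  simp [IsIdempotentElem]

end Aux

open Matrix IsLocalRing

theorem stmt6 {R : Type*} [CommRing R] [IsLocalRing R] (A : Matrix (Fin 2) (Fin 2) R) :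
    IsStronglyClean A ↔ IsUnit (1 - A) ∨ IsStronglyRadClean A := by
  constructor
  · rintro ⟨e, he, hu, hc⟩
    by_cases h1 : e = 1
    · subst h1; left; simpa [neg_sub] using hu.neg
    by_cases h0 : e = 0
    · subst h0; right; exact radClean_of_isUnit A (by simpa using hu)
    obtain ⟨htr, hdet⟩ := idem_facts e he.eq h0 h1
    set τ := (e * A * e).trace with hτdef
    have heA : e * A * e = τ • e := corner_smul e A htr hdet
    by_cases hτ : IsUnit τ
    · right; exact radClean_of_isUnit A (isUnit_of_corner A e he.eq hc hu τ hτ heA)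
    · right
      refine ⟨e, he, hu, hc, fun y => ?_⟩
      set μ := (e * y * e).trace with hμdef
      have hy : e * y * e = μ • e := corner_smul e y htr hdet
      have hnu : ¬ IsUnit (μ * τ) := fun h => hτ (isUnit_of_mul_isUnit_right h)
      obtain ⟨w, hw⟩ := isUnit_one_sub_self_of_mem_nonunits _ hnu
      have hX : e - e * y * e * (e * A * e) = (1 - μ * τ) • e := by
        rw [hy, heA, smul_mul_assoc, mul_smul_comm, smul_smul, he.eq, sub_smul, one_smul]
      refine ⟨(↑w⁻¹ : R) • e, ?_, ?_, ?_⟩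
      · rw [mul_smul_comm, smul_mul_assoc, he.eq, he.eq]
      · rw [hX, smul_mul_assoc, mul_smul_comm, smul_smul, he.eq, ← hw]
        rw [show (↑w⁻¹ : R) * ↑w = 1 from w.inv_mul, one_smul]
      · rw [hX, smul_mul_assoc, mul_smul_comm, smul_smul, he.eq, ← hw]
        rw [show (↑w : R) * ↑w⁻¹ = 1 from w.mul_inv, one_smul]
  · rintro (h | ⟨e, he, hu, hc, _⟩)
    · refine ⟨1, ?_, by simpa [neg_sub] using h.neg, by simp⟩
      simp [IsIdempotentElem]
    · exact ⟨e, he, hu, hc⟩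
end

section
/- Let R be a commutative local ring and A = [[1,1],[1,0]] ∈ M₂(R). Then A is strongly rad-clean but not strongly J-clean. -/
/-- `x` lies in the Jacobson radical of the (possibly noncommutative) ring `S`. -/
def MemJacobson {S : Type*} [Ring S] (x : S) : Prop := ∀ y : S, IsUnit (1 - y * x)

/-- `a` is strongly J-clean. -/
def IsStronglyJClean {S : Type*} [Ring S] (a : S) : Prop :=
  ∃ e : S, IsIdempotentElem e ∧ a * e = e * a ∧ MemJacobson (a - e)

private lemma aux_mem_max {R : Type*} [CommRing R] [IsLocalRing R] (x : R)
    (h : ∀ r : R, IsUnit (1 - r * x)) : x ∈ IsLocalRing.maximalIdeal R := by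
  rw [IsLocalRing.mem_maximalIdeal]
  intro hu
  obtain ⟨u, rfl⟩ := hu
  have := h ↑u⁻¹
  simp at this

theorem stmt9 {R : Type*} [CommRing R] [IsLocalRing R] :
    IsStronglyRadClean (!![1, 1; 1, 0] : Matrix (Fin 2) (Fin 2) R) ∧
    ¬ IsStronglyJClean (!![1, 1; 1, 0] : Matrix (Fin 2) (Fin 2) R) := by
  set A : Matrix (Fin 2) (Fin 2) R := !![1, 1; 1, 0] with hA
  constructor
  · -- strongly rad-clean with idempotent e = 0, since A is a unit
    refine ⟨0, by simp [IsIdempotentElem], ?_, by simp, fun y => ⟨0, by simp⟩⟩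
    rw [sub_zero, Matrix.isUnit_iff_isUnit_det]
    simp [hA, Matrix.det_fin_two_of]
  · rintro ⟨e, he, -, hJ⟩
    set w : Matrix (Fin 2) (Fin 2) R := A - e with hw
    have hE : e = A - w := by rw [hw]; abel
    -- every entry of w lies in the maximal ideal
    have key : ∀ i j : Fin 2, w i j ∈ IsLocalRing.maximalIdeal R := by
      intro i j
      apply aux_mem_max
      intro r
      have h1 := hJ (Matrix.single j i r)
      rw [Matrix.isUnit_iff_isUnit_det] at h1
      have hdet : (1 - Matrix.single j i r * w).det = 1 - r * w i j := by
        fin_cases i <;> fin_cases j <;>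
          simp [Matrix.det_fin_two, Matrix.mul_apply, Fin.sum_univ_two,
            Matrix.single, Matrix.one_apply]
      rwa [hdet] at h1
    -- det e is a unit (it is ≡ -1 mod the maximal ideal)
    have hdete : e.det = (1 - w 0 0) * (0 - w 1 1) - (1 - w 0 1) * (1 - w 1 0) := by
      rw [Matrix.det_fin_two, hE]
      simp [hA]
    have hdu : IsUnit e.det := by
      by_contra hnd
      have hm : e.det ∈ IsLocalRing.maximalIdeal R := by
        rwa [IsLocalRing.mem_maximalIdeal]
      have h1 : (1 : R) = ((1 - w 0 0) * (-1)) * w 1 1 - e.det + w 0 1 + w 1 0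
          - w 0 1 * w 1 0 := by rw [hdete]; ring
      have hmem : (1 : R) ∈ IsLocalRing.maximalIdeal R := by
        rw [h1]
        refine Ideal.sub_mem _ (Ideal.add_mem _ (Ideal.add_mem _ (Ideal.sub_mem _
          (Ideal.mul_mem_left _ _ (key 1 1)) hm) (key 0 1)) (key 1 0))
          (Ideal.mul_mem_right _ _ (key 0 1))
      exact (IsLocalRing.mem_maximalIdeal 1).mp hmem isUnit_one
    -- det e is idempotent, hence det e = 1
    have hsq : e.det * e.det = e.det := by rw [← Matrix.det_mul, he]
    have hdet1 : e.det = 1 := by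
      have := hdu.mul_left_cancel (by rw [mul_one, hsq] : e.det * e.det = e.det * 1)
      exact this
    -- e is an invertible idempotent, hence e = 1
    have heu : IsUnit e := by rw [Matrix.isUnit_iff_isUnit_det, hdet1]; exact isUnit_one
    have he1 : e = 1 := heu.mul_left_cancel (by rw [mul_one, he] : e * e = e * 1)
    -- but then w 0 1 = 1 is in the maximal ideal, contradiction
    have : (1 : R) ∈ IsLocalRing.maximalIdeal R := by
      have := key 0 1
      rw [hw, he1] at this
      simpa [hA] using this
    exact (IsLocalRing.mem_maximalIdeal 1).mp this isUnit_one
end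

section
/- Let R = ℤ localized at the prime 3, and A = [[2,1],[−1,1]] ∈ M₂(R). Then A is not strongly rad-clean. -/
instance : (Ideal.span {(3 : ℤ)}).IsPrime :=
  (Ideal.span_singleton_prime (by norm_num)).mpr (by norm_num)

theorem stmt10 :
    ¬ IsStronglyRadClean
      (!![2, 1; -1, 1] :
        Matrix (Fin 2) (Fin 2) (Localization.AtPrime (Ideal.span {(3 : ℤ)}))) := by
  set R := Localization.AtPrime (Ideal.span {(3 : ℤ)}) with hR
  have h3 : ¬ IsUnit (3 : R) := by
    have h := IsLocalization.AtPrime.isUnit_to_map_iff R (Ideal.span {(3 : ℤ)}) 3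
    rw [map_ofNat] at h
    intro hu
    exact (h.mp hu) (Ideal.mem_span_singleton_self 3)
  rintro ⟨e, he, hu, hc, hj⟩
  set A : Matrix (Fin 2) (Fin 2) R := !![2, 1; -1, 1] with hA
  have hc01 := congrFun (congrFun hc 0) 0
  have hc02 := congrFun (congrFun hc 0) 1
  simp [hA, Matrix.mul_apply, Fin.sum_univ_two] at hc01 hc02
  have he01 := congrFun (congrFun he 0) 1
  have he11 := congrFun (congrFun he 1) 1
  simp [IsIdempotentElem, Matrix.mul_apply, Fin.sum_univ_two] at he01 he11
  -- hc01 : 2 * e 0 0 + e 1 0 = e 0 0 * 2 + -e 0 1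
  -- hc02 : 2 * e 0 1 + e 1 1 = e 0 0 + e 0 1
  have hcb : e 1 0 = -(e 0 1) := by linear_combination hc01
  have ha : e 0 0 = e 0 1 + e 1 1 := by linear_combination -hc02
  have key : e 0 1 * (e 0 1 + 2 * e 1 1 - 1) = 0 := by
    linear_combination he01 + e 0 1 * hc02
  rcases mul_eq_zero.mp key with hb | hb
  · -- e 0 1 = 0
    rw [hcb, hb] at he11
    have hd : e 1 1 * (e 1 1 - 1) = 0 := by linear_combination he11
    rcases mul_eq_zero.mp hd with hd0 | hd1
    · -- e = 0 : A must be a unit, but det A = 3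
      have he0 : e = 0 := by
        ext i j
        fin_cases i <;> fin_cases j <;>
          simp [ha, hb, hcb, hd0]
      rw [he0, sub_zero] at hu
      have hdet := (Matrix.isUnit_iff_isUnit_det A).mp hu
      rw [Matrix.det_fin_two] at hdet
      simp only [hA] at hdet
      norm_num at hdet
      exact h3 hdet
    · -- e = 1 : use the corner-Jacobson condition with y = !![2,0;0,0]
      have hd1' : e 1 1 = 1 := by linear_combination hd1
      have he1 : e = 1 := by
        ext i j
        fin_cases i <;> fin_cases j <;>
          simp [ha, hb, hcb, hd1', Matrix.one_apply]
      obtain ⟨s, -, hs2, hs3⟩ := hj !![2, 0; 0, 0]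
      rw [he1] at hs2 hs3
      simp only [one_mul, mul_one] at hs2 hs3
      have hU : IsUnit ((1 : Matrix (Fin 2) (Fin 2) R) - !![2, 0; 0, 0] * A) :=
        ⟨⟨_, s, hs3, hs2⟩, rfl⟩
      have hdet := (Matrix.isUnit_iff_isUnit_det _).mp hU
      rw [Matrix.det_fin_two] at hdet
      simp [hA, Matrix.sub_apply, Matrix.mul_apply, Fin.sum_univ_two,
        Matrix.one_apply] at hdet
      norm_num at hdet
      have : IsUnit (3 : R) := by simpa using hdet.neg
      exact h3 this
  · -- e 0 1 = 1 - 2 * e 1 1 forces 3 to be a unit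
    have hb3 : e 0 1 = 1 - 2 * e 1 1 := by linear_combination hb
    rw [hcb, hb3] at he11
    refine h3 (IsUnit.of_mul_eq_one (a := 3) (e 1 1 - e 1 1 * e 1 1) ?_)
    linear_combination he11
end

section
/- Let R = ℤ₂-hat, the ring of 2-adic integers. Then every A ∈ M₂(R) with tr(A) a unit is strongly rad-clean. -/
open Matrix Polynomial

lemma nonunit_sub_unit {a b : ℤ_[2]} (hb : IsUnit b) (ha : ¬IsUnit a) :
    IsUnit (b - a) := by
  have : IsUnit (b - a + a) := by simpa using hb
  rcases IsLocalRing.isUnit_or_isUnit_of_isUnit_add this with h' | h'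
  · exact h'
  · exact absurd h' ha

lemma unit_one_sub_mul {a : ℤ_[2]} (ha : ¬IsUnit a) (g : ℤ_[2]) :
    IsUnit (1 - a * g) :=
  nonunit_sub_unit isUnit_one fun hu => ha (isUnit_of_mul_isUnit_left hu)

lemma det_one_sub_smul_s14 (a : ℤ_[2]) (m : Matrix (Fin 2) (Fin 2) ℤ_[2]) :
    (1 - a • m).det
      = 1 - a * (m 0 0 + m 1 1 - a * (m 0 0 * m 1 1 - m 0 1 * m 1 0)) := by
  simp [Matrix.det_fin_two, Matrix.sub_apply, Matrix.smul_apply, Matrix.one_apply,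
    smul_eq_mul]
  ring

set_option maxHeartbeats 1000000 in
theorem stmt14 (A : Matrix (Fin 2) (Fin 2) ℤ_[2]) (h : IsUnit A.trace) :
    IsStronglyRadClean A := by
  set t := A.trace with htdef
  set d := A.det with hddef
  have hA2 : A * A = t • A - d • (1 : Matrix (Fin 2) (Fin 2) ℤ_[2]) := by
    ext i j
    fin_cases i <;> fin_cases j <;>
      simp [htdef, hddef, Matrix.mul_apply, Matrix.trace, Matrix.det_fin_two,
        Fin.sum_univ_two, Matrix.one_apply, Matrix.smul_apply, Matrix.sub_apply,
        smul_eq_mul] <;> ring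
  by_cases hd : IsUnit d
  · refine ⟨0, by simp [IsIdempotentElem], ?_, by simp, ?_⟩
    · simpa using (Matrix.isUnit_iff_isUnit_det A).2 hd
    · intro y
      exact ⟨0, by simp, by simp, by simp⟩
  · have ht1 : ‖t‖ = 1 := PadicInt.isUnit_iff.1 h
    have hder : (X ^ 2 - C t * X + C d : Polynomial ℤ_[2]).derivative
        = C 2 * X - C t := by
      simp [derivative_sub, derivative_mul]
      rw [one_add_one_eq_two]; exact (map_ofNat C 2).symm
    have hcond : ‖(X ^ 2 - C t * X + C d : Polynomial ℤ_[2]).eval 0‖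
        < ‖((X ^ 2 - C t * X + C d : Polynomial ℤ_[2]).derivative).eval 0‖ ^ 2 := by
      rw [hder]
      simp only [eval_add, eval_sub, eval_pow, eval_mul, eval_C, eval_X,
        mul_zero, zero_sub, norm_neg, zero_pow, sub_zero, zero_add, ht1]
      simpa using PadicInt.not_isUnit_iff.1 hd
    obtain ⟨α, hroot, hα, -, -⟩ := hensels_lemma hcond
    simp only [coe_aeval_eq_eval, eval_add, eval_sub, eval_pow, eval_mul, eval_C, eval_X] at hroot
    have hαn : ¬ IsUnit α := by
      rw [PadicInt.not_isUnit_iff]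
      rw [hder] at hα
      simp only [coe_aeval_eq_eval, eval_sub, eval_mul, eval_C, eval_X, mul_zero, zero_sub,
        norm_neg, ht1] at hα
      simpa using hα
    obtain ⟨β, hβ⟩ : ∃ b : ℤ_[2], b = t - α := ⟨_, rfl⟩
    have hsum : t = α + β := by rw [hβ]; ring
    have hprod : d = α * β := by rw [hβ]; linear_combination hroot
    rw [hsum, hprod] at hA2
    have hβu : IsUnit β := by rw [hβ]; exact nonunit_sub_unit h hαn
    have hα1u : IsUnit (α - 1) := by
      have h1 : IsUnit (1 - α) := nonunit_sub_unit isUnit_one hαn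
      have := h1.neg
      simpa using this
    have hαα : ¬ IsUnit (α + α) := fun hu =>
      hαn ((IsLocalRing.isUnit_or_isUnit_of_isUnit_add hu).elim id id)
    have hcu : IsUnit (β - α) := by
      have hba : β - α = t - (α + α) := by rw [hβ]; ring
      rw [hba]; exact nonunit_sub_unit h hαα
    obtain ⟨γ, hγ1, hγ2⟩ := isUnit_iff_exists.1 hcu
    obtain ⟨δ, hδ1, hδ2⟩ := isUnit_iff_exists.1 hα1u
    obtain ⟨ε, hε1, hε2⟩ := isUnit_iff_exists.1 hβu
    set e : Matrix (Fin 2) (Fin 2) ℤ_[2] :=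
      γ • (β • (1 : Matrix (Fin 2) (Fin 2) ℤ_[2]) - A) with hedef
    set f : Matrix (Fin 2) (Fin 2) ℤ_[2] :=
      γ • (A - α • (1 : Matrix (Fin 2) (Fin 2) ℤ_[2])) with hfdef
    have hef1 : e + f = 1 := by
      rw [hedef, hfdef]
      match_scalars <;>
        first | ring1 | linear_combination hγ2 | linear_combination -hγ2
    have hf1e : f = 1 - e := by rw [← hef1]; abel
    have hBA : (β • (1 : Matrix (Fin 2) (Fin 2) ℤ_[2]) - A) * A
        = α • (β • (1 : Matrix (Fin 2) (Fin 2) ℤ_[2]) - A) := by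
      simp only [sub_mul, smul_mul_assoc, one_mul, hA2]
      match_scalars <;> ring1
    have hAB : A * (β • (1 : Matrix (Fin 2) (Fin 2) ℤ_[2]) - A)
        = α • (β • (1 : Matrix (Fin 2) (Fin 2) ℤ_[2]) - A) := by
      simp only [mul_sub, mul_smul_comm, mul_one, hA2]
      match_scalars <;> ring1
    have hBB : (β • (1 : Matrix (Fin 2) (Fin 2) ℤ_[2]) - A)
          * (β • (1 : Matrix (Fin 2) (Fin 2) ℤ_[2]) - A)
        = (β - α) • (β • (1 : Matrix (Fin 2) (Fin 2) ℤ_[2]) - A) := by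
      simp only [mul_sub, sub_mul, mul_smul_comm, smul_mul_assoc, one_mul,
        mul_one, hA2, smul_smul]
      match_scalars <;> ring1
    have hee : e * e = e := by
      rw [hedef, smul_mul_assoc, mul_smul_comm, hBB, smul_smul, smul_smul,
        mul_assoc, hγ2, mul_one]
    have heA : e * A = α • e := by
      rw [hedef, smul_mul_assoc, hBA]
      exact smul_comm _ _ _
    have hAe : A * e = α • e := by
      rw [hedef, mul_smul_comm, hAB]
      exact smul_comm _ _ _
    have hcomm : A * e = e * A := by rw [heA, hAe]
    have hAef : A - e = (α - 1) • e + β • f := by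
      rw [hedef, hfdef]
      match_scalars <;>
        first | ring1 | linear_combination hγ2 | linear_combination -hγ2
    have hff : f * f = f := by
      rw [hf1e]
      simp only [mul_sub, sub_mul, one_mul, mul_one, hee]
      abel
    have hef0 : e * f = 0 := by
      rw [hf1e, mul_sub, mul_one, hee, sub_self]
    have hfe0 : f * e = 0 := by
      rw [hf1e, sub_mul, one_mul, hee, sub_self]
    have hinv : ((α - 1) • e + β • f) * (δ • e + ε • f) = 1 := by
      simp only [add_mul, mul_add, smul_mul_assoc, mul_smul_comm, hee, hff,
        hef0, hfe0, smul_smul, smul_zero, add_zero, zero_add, hδ1, hδ2, hε1,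
        hε2, one_smul]
      exact hef1
    have hinv' : (δ • e + ε • f) * ((α - 1) • e + β • f) = 1 := by
      simp only [add_mul, mul_add, smul_mul_assoc, mul_smul_comm, hee, hff,
        hef0, hfe0, smul_smul, smul_zero, add_zero, zero_add, hδ1, hδ2, hε1,
        hε2, one_smul]
      exact hef1
    have hunit : IsUnit (A - e) := by
      rw [hAef]
      exact ⟨⟨_, _, hinv, hinv'⟩, rfl⟩
    refine ⟨e, hee, hunit, hcomm, ?_⟩
    intro y
    have heAe : e * A * e = α • e := by rw [heA, smul_mul_assoc, hee]
    have hem : e * (e * y * e) = e * y * e := by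
      rw [← mul_assoc, ← mul_assoc, hee]
    have hme : e * y * e * e = e * y * e := by rw [mul_assoc, hee]
    have hex : e * (α • (e * y * e)) = α • (e * y * e) := by
      rw [mul_smul_comm, hem]
    have hxe : (α • (e * y * e)) * e = α • (e * y * e) := by
      rw [smul_mul_assoc, hme]
    have hgoal : e - e * y * e * (e * A * e) = e - α • (e * y * e) := by
      rw [heAe, mul_smul_comm, hme]
    have hxu : IsUnit (1 - α • (e * y * e)) := by
      rw [Matrix.isUnit_iff_isUnit_det, det_one_sub_smul_s14]
      exact unit_one_sub_mul hαn _
    obtain ⟨u, hu⟩ := hxu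
    set w : Matrix (Fin 2) (Fin 2) ℤ_[2] := ↑u⁻¹ with hwdef
    have hw1 : (1 - α • (e * y * e)) * w = 1 := by rw [hwdef, ← hu]; exact u.mul_inv
    have hw2 : w * (1 - α • (e * y * e)) = 1 := by
      rw [hwdef, ← hu]; exact u.inv_mul
    have h1 : e * (1 - α • (e * y * e)) = (1 - α • (e * y * e)) * e := by
      rw [mul_sub, sub_mul, mul_one, one_mul, hex, hxe]
    have hcomm' : e * w = w * e := by
      calc e * w = (w * (1 - α • (e * y * e))) * (e * w) := by rw [hw2, one_mul]
        _ = w * ((1 - α • (e * y * e)) * e) * w := by simp only [mul_assoc]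
        _ = w * (e * (1 - α • (e * y * e))) * w := by rw [h1]
        _ = (w * e) * ((1 - α • (e * y * e)) * w) := by simp only [mul_assoc]
        _ = w * e := by rw [hw1, mul_one]
    have hEx : e - α • (e * y * e) = e * (1 - α • (e * y * e)) := by
      rw [mul_sub, mul_one, hex]
    have hxE : e - α • (e * y * e) = (1 - α • (e * y * e)) * e := by
      rw [sub_mul, one_mul, hxe]
    have h5 : (e - α • (e * y * e)) * e = e - α • (e * y * e) := by
      rw [sub_mul, hee, hxe]
    have h6 : e * (e - α • (e * y * e)) = e - α • (e * y * e) := by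
      rw [mul_sub, hee, hex]
    refine ⟨e * w, ?_, ?_, ?_⟩
    · rw [← mul_assoc, hee, mul_assoc, ← hcomm', ← mul_assoc, hee]
    · rw [hgoal, hcomm', mul_assoc, h6, hxE, ← mul_assoc, hw2, one_mul]
    · rw [hgoal, ← mul_assoc, h5, hEx, mul_assoc, hw1, mul_one]
end

section
/- The matrix A = [[1,1],[1,1]] over the 2-adic integers is not strongly rad-clean. -/
open Matrix

/-- `1 - 2a` is a unit in `ℤ_[2]`. -/
lemma aux_unit15 (a : ℤ_[2]) : IsUnit (1 - 2 * a) := by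
  rcases (IsLocalRing.isUnit_or_isUnit_one_sub_self (2 * a)) with h | h
  · exfalso
    have h2 : IsUnit (2 : ℤ_[2]) := isUnit_of_mul_isUnit_left h
    rw [PadicInt.isUnit_iff] at h2
    have := PadicInt.norm_p (p := 2)
    push_cast at this
    rw [this] at h2
    norm_num at h2
  · exact h

theorem stmt15 :
    ¬ IsStronglyRadClean (!![1, 1; 1, 1] : Matrix (Fin 2) (Fin 2) ℤ_[2]) := by
  rintro ⟨e, he, hu, hc, hj⟩
  -- from commutation: e 1 0 = e 0 1 and e 1 1 = e 0 0
  have hc00 := congrFun (congrFun hc 0) 0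
  have hc01 := congrFun (congrFun hc 0) 1
  simp [Matrix.mul_apply, Fin.sum_univ_two] at hc00 hc01
  have h11 : e 1 1 = e 0 0 := by
    have := hc01
    rw [add_comm (e 0 0) (e 0 1)] at this
    exact add_left_cancel this
  -- idempotency entries
  have hi00 := congrFun (congrFun he 0) 0
  have hi01 := congrFun (congrFun he 0) 1
  simp [IsIdempotentElem, Matrix.mul_apply, Fin.sum_univ_two] at hi00 hi01
  rw [h11] at hi01
  rw [hc00] at hi00
  -- hi01 : e 0 0 * e 0 1 + e 0 1 * e 0 0 = e 0 1
  have hb : e 0 1 = 0 := by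
    have hz : (1 - 2 * e 0 0) * e 0 1 = 0 := by ring_nf; ring_nf at hi01; linear_combination -hi01
    rcases (aux_unit15 (e 0 0)) with ⟨u, hu'⟩
    have := congrArg (fun x => (↑u⁻¹ : ℤ_[2]) * x) hz
    simp [← hu', ← mul_assoc] at this
    exact this
  rw [hb] at hi00
  simp at hi00
  -- hi00 : e 0 0 * e 0 0 = e 0 0
  have ha : e 0 0 = 0 ∨ e 0 0 = 1 := by
    rcases mul_eq_zero.mp (show e 0 0 * (e 0 0 - 1) = 0 by ring_nf; linear_combination hi00) with h | h
    · exact Or.inl h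
    · exact Or.inr (by linear_combination h)
  have heta := Matrix.eta_fin_two e
  rw [hc00, h11, hb] at heta
  have hedesc : e = 0 ∨ e = 1 := by
    rcases ha with h | h
    · left
      rw [heta, h]
      rw [show (0 : Matrix (Fin 2) (Fin 2) ℤ_[2]) = !![0, 0; 0, 0] by
        rw [Matrix.eta_fin_two 0]; simp]
    · right
      rw [heta, h, Matrix.one_fin_two]
  rcases hedesc with rfl | rfl
  · -- e = 0 : A must be a unit, but det A = 0
    rw [sub_zero] at hu
    have hd := (Matrix.isUnit_iff_isUnit_det _).mp hu
    rw [Matrix.det_fin_two_of] at hd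
    norm_num at hd
  · -- e = 1 : 1 - y*A must be a unit for all y, take y = !![1,0;0,0]
    obtain ⟨s, -, -, hs2⟩ := hj (!![1, 0; 0, 0])
    simp only [one_mul, mul_one] at hs2
    have hd : IsUnit (((1 : Matrix (Fin 2) (Fin 2) ℤ_[2]) -
        !![1, 0; 0, 0] * !![1, 1; 1, 1]).det) := by
      refine isUnit_of_mul_isUnit_left (y := s.det) ?_
      rw [← Matrix.det_mul, hs2]
      simp
    have hM : ((1 : Matrix (Fin 2) (Fin 2) ℤ_[2]) -
        !![1, 0; 0, 0] * !![1, 1; 1, 1]) = !![0, -1; 0, 1] := by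
      rw [Matrix.one_fin_two]
      ext i j
      fin_cases i <;> fin_cases j <;>
        simp [Matrix.mul_apply, Fin.sum_univ_two]
    rw [hM, Matrix.det_fin_two_of] at hd
    norm_num at hd
end

section
/- Let R be a commutative local ring and A(x) ∈ M₂(R[[x]]). Then A(x) is strongly rad-clean in M₂(R[[x]]) if and only if A(0) is strongly rad-clean in M₂(R). -/
section Transport
variable {S S' : Type*} [Ring S] [Ring S']

lemma MemCornerJacobson.map (φ : S →+* S') (hφ : Function.Surjective φ) {e j : S}
    (h : MemCornerJacobson e j) : MemCornerJacobson (φ e) (φ j) := by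
  intro y
  obtain ⟨Y, rfl⟩ := hφ y
  obtain ⟨s, h1, h2, h3⟩ := h Y
  refine ⟨φ s, ?_, ?_, ?_⟩
  · simpa [map_mul] using congrArg φ h1
  · simpa [map_mul, map_sub] using congrArg φ h2
  · simpa [map_mul, map_sub] using congrArg φ h3

lemma IsStronglyRadClean.map (φ : S →+* S') (hφ : Function.Surjective φ) {a : S}
    (h : IsStronglyRadClean a) : IsStronglyRadClean (φ a) := by
  obtain ⟨e, he, hu, hc, hj⟩ := h
  refine ⟨φ e, ?_, ?_, ?_, ?_⟩
  · simpa [IsIdempotentElem, map_mul] using congrArg φ he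
  · simpa [map_sub] using hu.map φ
  · simpa [map_mul] using congrArg φ hc
  · simpa [map_mul] using hj.map φ hφ

def conjHom (u : Sˣ) : S →+* S where
  toFun x := ↑u * x * ↑u⁻¹
  map_one' := by simp
  map_mul' x y := by simp [mul_assoc]
  map_zero' := by simp
  map_add' x y := by noncomm_ring

lemma conjHom_surjective (u : Sˣ) : Function.Surjective (conjHom u) := fun x =>
  ⟨↑u⁻¹ * x * ↑u, by simp [conjHom, mul_assoc]⟩

lemma conjHom_apply (u : Sˣ) (x : S) : conjHom u x = ↑u * x * ↑u⁻¹ := rfl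

end Transport

open PowerSeries Finset

section Newton
variable {R : Type*} [CommRing R]

noncomputable def newtonSeq (v α : R) (T D : PowerSeries R) : ℕ → R
  | 0 => α
  | n+1 => v * ((∑ i : Fin (n+1), coeff (R := R) (i+1) T * newtonSeq v α T D (n - i))
      - (∑ i : Fin n, newtonSeq v α T D (i+1) * newtonSeq v α T D (n - i))
      - coeff (R := R) (n+1) D)
  termination_by n => n
  decreasing_by all_goals omega

lemma quad_root (T D : PowerSeries R) (α : R)
    (h0 : α * α - constantCoeff (R := R) T * α + constantCoeff (R := R) D = 0)
    (hu : IsUnit (2 * α - constantCoeff (R := R) T)) :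
    ∃ lam : PowerSeries R, constantCoeff (R := R) lam = α ∧ lam * lam - T * lam + D = 0 := by
  obtain ⟨v, hv⟩ : ∃ v, v * (2 * α - constantCoeff (R := R) T) = 1 := ⟨↑hu.unit⁻¹, hu.val_inv_mul⟩
  set c := newtonSeq v α T D with hc
  have hc0 : c 0 = α := by rw [hc, newtonSeq]
  refine ⟨PowerSeries.mk c, by simp [hc0], ?_⟩
  ext n
  rw [map_add, map_sub, PowerSeries.coeff_mul, PowerSeries.coeff_mul, map_zero]
  rw [Finset.Nat.sum_antidiagonal_eq_sum_range_succ_mk,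
    Finset.Nat.sum_antidiagonal_eq_sum_range_succ_mk]
  simp only [PowerSeries.coeff_mk]
  cases n with
  | zero =>
    simp only [Finset.sum_range_one, hc0]
    simpa using h0
  | succ m =>
    have hcs : c (m+1) = v * ((∑ i ∈ range (m+1), coeff (R := R) (i+1) T * c (m - i))
        - (∑ i ∈ range m, c (i+1) * c (m - i)) - coeff (R := R) (m+1) D) := by
      rw [hc]
      rw [newtonSeq]
      rw [Fin.sum_univ_eq_sum_range (fun i => coeff (R := R) (i+1) T * newtonSeq v α T D (m - i)),
        Fin.sum_univ_eq_sum_range (fun i => newtonSeq v α T D (i+1) * newtonSeq v α T D (m - i))]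
    have hkey : (2 * α - constantCoeff (R := R) T) * c (m+1) =
        (∑ i ∈ range (m+1), coeff (R := R) (i+1) T * c (m - i))
        - (∑ i ∈ range m, c (i+1) * c (m - i)) - coeff (R := R) (m+1) D := by
      rw [hcs, ← mul_assoc, mul_comm (2 * α - constantCoeff (R := R) T) v, hv, one_mul]
    have e1 : ∑ k ∈ range (m+1+1), c k * c (m+1-k)
        = (∑ i ∈ range m, c (i+1) * c (m - i)) + α * c (m+1) + c (m+1) * α := by
      rw [Finset.sum_range_succ, Finset.sum_range_succ']
      simp [hc0, Nat.succ_sub_succ]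
      try ring
    have e2 : ∑ k ∈ range (m+1+1), coeff (R := R) k T * c (m+1-k)
        = constantCoeff (R := R) T * c (m+1) + ∑ i ∈ range (m+1), coeff (R := R) (i+1) T * c (m - i) := by
      rw [Finset.sum_range_succ']
      simp [Nat.succ_sub_succ, PowerSeries.coeff_zero_eq_constantCoeff]
      try ring
    rw [e1, e2]
    linear_combination hkey

lemma isUnit_lift (B : Matrix (Fin 2) (Fin 2) (PowerSeries R))
    (h : IsUnit ((constantCoeff (R := R)).mapMatrix B)) : IsUnit B := by
  rw [Matrix.isUnit_iff_isUnit_det] at h ⊢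
  rw [← RingHom.map_det] at h
  exact PowerSeries.isUnit_iff_constantCoeff.mpr h

end Newton

section Local
variable {R : Type*} [CommRing R] [IsLocalRing R]

omit [IsLocalRing R] in
lemma eq_zero_of_mul_unit {x u : R} (h : IsUnit u) (hx : x * u = 0) : x = 0 := by
  obtain ⟨v, hv⟩ : ∃ v, u * v = 1 := ⟨↑h.unit⁻¹, h.mul_val_inv⟩
  calc x = x * (u * v) := by rw [hv, mul_one]
  _ = (x * u) * v := by ring
  _ = 0 := by rw [hx, zero_mul]

lemma idem01 {x : R} (h : x * x = x) : x = 0 ∨ x = 1 := by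
  have hsum : IsUnit (x + (1 - x)) := by simpa using isUnit_one
  rcases IsLocalRing.isUnit_or_isUnit_of_isUnit_add hsum with hx | hx
  · right
    have h1 : (x - 1) * x = 0 := by linear_combination h
    have h2 := eq_zero_of_mul_unit hx h1
    linear_combination h2
  · left
    have h1 : x * (1 - x) = 0 := by linear_combination -h
    exact eq_zero_of_mul_unit hx h1

lemma unit_of_unit_of_nonunit_part {x y : R} (h : IsUnit (x + y)) (hx : ¬IsUnit x) : IsUnit y :=
  (IsLocalRing.isUnit_or_isUnit_of_isUnit_add h).resolve_left hx

lemma idem_conj (e : Matrix (Fin 2) (Fin 2) R)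
    (he : e * e = e) (h0 : e ≠ 0) (h1 : e ≠ 1) :
    ∃ P : (Matrix (Fin 2) (Fin 2) R)ˣ,
      e * (P : Matrix (Fin 2) (Fin 2) R) = (P : Matrix (Fin 2) (Fin 2) R) * !![(1:R),0;0,0] := by
  have ha : e 0 0 * e 0 0 + e 0 1 * e 1 0 = e 0 0 := by
    have := congrFun (congrFun he 0) 0
    simpa [Matrix.mul_apply, Fin.sum_univ_succ] using this
  have hb : e 0 0 * e 0 1 + e 0 1 * e 1 1 = e 0 1 := by
    have := congrFun (congrFun he 0) 1
    simpa [Matrix.mul_apply, Fin.sum_univ_succ] using this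
  have hcq : e 1 0 * e 0 0 + e 1 1 * e 1 0 = e 1 0 := by
    have := congrFun (congrFun he 1) 0
    simpa [Matrix.mul_apply, Fin.sum_univ_succ] using this
  have hd : e 1 0 * e 0 1 + e 1 1 * e 1 1 = e 1 1 := by
    have := congrFun (congrFun he 1) 1
    simpa [Matrix.mul_apply, Fin.sum_univ_succ] using this
  have htr : ¬IsUnit (e 0 0 + e 1 1 - 1) := by
    intro hu
    have hb0 : e 0 1 = 0 := by
      refine eq_zero_of_mul_unit hu ?_
      linear_combination hb
    have hc0 : e 1 0 = 0 := by
      refine eq_zero_of_mul_unit hu ?_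
      linear_combination hcq
    rw [hb0, hc0] at ha hd
    have haa : e 0 0 * e 0 0 = e 0 0 := by linear_combination ha
    have hdd : e 1 1 * e 1 1 = e 1 1 := by linear_combination hd
    rcases idem01 haa with ha0 | ha1 <;> rcases idem01 hdd with hd0 | hd1
    · exact h0 (by ext i j; fin_cases i <;> fin_cases j <;> simp [ha0, hd0, hb0, hc0])
    · rw [ha0, hd1] at hu; simp at hu
    · rw [ha1, hd0] at hu; simp at hu
    · exact h1 (by ext i j; fin_cases i <;> fin_cases j <;>
        simp [ha1, hd1, hb0, hc0, Matrix.one_apply])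
  have ht : IsUnit (e 0 0 + e 1 1) := by
    refine unit_of_unit_of_nonunit_part (y := e 0 0 + e 1 1) (x := -(e 0 0 + e 1 1 - 1)) ?_ ?_
    · have : -(e 0 0 + e 1 1 - 1) + (e 0 0 + e 1 1) = 1 := by ring
      rw [this]; exact isUnit_one
    · exact fun hcon => htr (by simpa using hcon.neg)
  by_cases hau : IsUnit (e 0 0)
  · have h2 : IsUnit (2 - (e 0 0 + e 1 1)) := by
      refine unit_of_unit_of_nonunit_part (x := e 0 0 + e 1 1 - 1) ?_ htr
      have : e 0 0 + e 1 1 - 1 + (2 - (e 0 0 + e 1 1)) = 1 := by ring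
      rw [this]; exact isUnit_one
    have hdet : IsUnit (!![e 0 0, -(e 0 1); e 1 0, 1 - e 1 1]).det := by
      rw [Matrix.det_fin_two_of]
      have : e 0 0 * (1 - e 1 1) - (-(e 0 1)) * e 1 0 = e 0 0 * (2 - (e 0 0 + e 1 1)) := by
        linear_combination ha
      rw [this]; exact hau.mul h2
    have hPu := (Matrix.isUnit_iff_isUnit_det _).mpr hdet
    refine ⟨hPu.unit, ?_⟩
    simp only [IsUnit.unit_spec]
    ext i j
    fin_cases i <;> fin_cases j <;>
      simp [Matrix.mul_apply, Fin.sum_univ_succ]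
    · linear_combination ha
    · linear_combination -hb
    · linear_combination hcq
    · linear_combination -hd
  · have ha1 : IsUnit (e 0 0 - 1) := by
      have hone : IsUnit (e 0 0 + (1 - e 0 0)) := by simpa using isUnit_one
      have := unit_of_unit_of_nonunit_part hone hau
      simpa using this.neg
    have hdet : IsUnit (!![e 0 1, 1 - e 0 0; e 1 1, -(e 1 0)]).det := by
      rw [Matrix.det_fin_two_of]
      have : e 0 1 * (-(e 1 0)) - (1 - e 0 0) * e 1 1
          = (e 0 0 + e 1 1) * (e 0 0 - 1) := by linear_combination -ha
      rw [this]; exact ht.mul ha1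
    have hPu := (Matrix.isUnit_iff_isUnit_det _).mpr hdet
    refine ⟨hPu.unit, ?_⟩
    simp only [IsUnit.unit_spec]
    ext i j
    fin_cases i <;> fin_cases j <;>
      simp [Matrix.mul_apply, Fin.sum_univ_succ]
    · linear_combination hb
    · linear_combination -ha
    · linear_combination hd
    · linear_combination -hcq

omit [IsLocalRing R] in
lemma mapMatrix_one_sub_smul (lam : PowerSeries R) (M : Matrix (Fin 2) (Fin 2) (PowerSeries R)) :
    (constantCoeff (R := R)).mapMatrix ((1 : Matrix (Fin 2) (Fin 2) (PowerSeries R)) - lam • M)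
      = 1 - (constantCoeff (R := R) lam) • ((constantCoeff (R := R)).mapMatrix M) := by
  ext i j
  simp [RingHom.mapMatrix_apply, Matrix.map_apply, Matrix.sub_apply, Matrix.smul_apply,
    Matrix.one_apply, map_sub, map_mul, smul_eq_mul, apply_ite (constantCoeff (R := R))]

set_option maxHeartbeats 1600000 in
lemma main_case (A' : Matrix (Fin 2) (Fin 2) (PowerSeries R))
    (hcB : ((constantCoeff (R := R)).mapMatrix A') * !![(1:R),0;0,0]
      = !![(1:R),0;0,0] * ((constantCoeff (R := R)).mapMatrix A'))
    (huB : IsUnit ((constantCoeff (R := R)).mapMatrix A' - !![(1:R),0;0,0]))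
    (hjB : MemCornerJacobson (!![(1:R),0;0,0])
      (!![(1:R),0;0,0] * ((constantCoeff (R := R)).mapMatrix A') * !![(1:R),0;0,0])) :
    IsStronglyRadClean A' := by
  set π : Matrix (Fin 2) (Fin 2) (PowerSeries R) →+* Matrix (Fin 2) (Fin 2) R :=
    (constantCoeff (R := R)).mapMatrix with hπ
  set B := π A' with hB
  have hB01 : B 0 1 = 0 := by
    have := congrFun (congrFun hcB 0) 1
    simpa [Matrix.mul_apply, Fin.sum_univ_succ] using this.symm
  have hB10 : B 1 0 = 0 := by
    have := congrFun (congrFun hcB 1) 0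
    simpa [Matrix.mul_apply, Fin.sum_univ_succ] using this
  set α := B 0 0 with hαdef
  set δ := B 1 1 with hδdef
  have hεBε : !![(1:R),0;0,0] * B * !![(1:R),0;0,0] = !![α,0;0,0] := by
    ext i j
    fin_cases i <;> fin_cases j <;>
      simp [Matrix.mul_apply, Matrix.vecMul, dotProduct, Fin.sum_univ_succ, hαdef]
  have hα : ¬IsUnit α := by
    intro hav
    obtain ⟨s, hs1, hs2, hs3⟩ := hjB !![(↑hav.unit⁻¹ : R), 0; 0, 0]
    rw [hεBε] at hs2
    have hcol : (!![(1:R),0;0,0] - !![(1:R),0;0,0] * !![(↑hav.unit⁻¹ : R), 0; 0, 0] *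
        !![(1:R),0;0,0] * !![α,0;0,0]) = 0 := by
      ext i j
      fin_cases i <;> fin_cases j <;>
        simp [Matrix.mul_apply, Fin.sum_univ_succ] <;>
        linear_combination hav.val_inv_mul
    rw [hcol, mul_zero] at hs2
    have := congrFun (congrFun hs2 0) 0
    simp at this
  have hδ : IsUnit δ := by
    have hdet := (Matrix.isUnit_iff_isUnit_det _).mp huB
    have hd2 : (B - !![(1:R),0;0,0]).det = (α - 1) * δ := by
      rw [Matrix.det_fin_two]
      simp [Matrix.sub_apply, hB01, hB10, hαdef, hδdef]
    rw [hd2] at hdet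
    exact isUnit_of_mul_isUnit_right hdet
  have hδα : IsUnit (δ - α) := by
    refine unit_of_unit_of_nonunit_part (x := α) ?_ hα
    have h : α + (δ - α) = δ := by ring
    rw [h]; exact hδ
  set T := Matrix.trace A' with hTdef
  set D := Matrix.det A' with hDdef
  have heq00 : constantCoeff (R := R) (A' 0 0) = α := rfl
  have heq11 : constantCoeff (R := R) (A' 1 1) = δ := rfl
  have hB01' : constantCoeff (R := R) (A' 0 1) = 0 := hB01
  have hB10' : constantCoeff (R := R) (A' 1 0) = 0 := hB10
  have hT0 : constantCoeff (R := R) T = α + δ := by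
    rw [hTdef, Matrix.trace_fin_two, map_add, heq00, heq11]
  have hD0 : constantCoeff (R := R) D = α * δ := by
    rw [hDdef, Matrix.det_fin_two, map_sub, map_mul, map_mul, heq00, heq11, hB01', hB10']
    ring
  obtain ⟨lam, hlam0, hroot⟩ := quad_root T D α
    (by rw [hT0, hD0]; ring)
    (by
      have h : 2 * α - constantCoeff (R := R) T = -(δ - α) := by rw [hT0]; ring
      rw [h]; exact hδα.neg)
  set μ := T - lam with hμdef
  have hμlc : constantCoeff (R := R) (μ - lam) = δ - α := by
    rw [hμdef, map_sub, map_sub, hT0, hlam0]; ring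
  have hμl : IsUnit (μ - lam) := by
    rw [PowerSeries.isUnit_iff_constantCoeff, hμlc]; exact hδα
  set w : PowerSeries R := ↑hμl.unit⁻¹ with hwdef
  have hw : w * (μ - lam) = 1 := hμl.val_inv_mul
  have hcw : constantCoeff (R := R) w * (δ - α) = 1 := by
    have h := congrArg (constantCoeff (R := R)) hw
    rw [map_mul, hμlc, map_one] at h
    exact h
  have htr2 : lam + μ = A' 0 0 + A' 1 1 := by
    have hT2 : T = A' 0 0 + A' 1 1 := by rw [hTdef, Matrix.trace_fin_two]
    rw [hμdef]; linear_combination hT2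
  have hdet2 : lam * μ = A' 0 0 * A' 1 1 - A' 0 1 * A' 1 0 := by
    have hD2 : D = A' 0 0 * A' 1 1 - A' 0 1 * A' 1 0 := by rw [hDdef, Matrix.det_fin_two]
    rw [hμdef]; linear_combination hD2 - hroot
  set N := A' - lam • (1 : Matrix (Fin 2) (Fin 2) (PowerSeries R)) with hNdef
  have hNN : N * (A' - μ • 1) = 0 := by
    rw [hNdef]
    ext i j : 1
    fin_cases i <;> fin_cases j <;>
      simp [Matrix.mul_apply, Fin.sum_univ_succ, Matrix.one_apply, Matrix.sub_apply,
        Matrix.smul_apply, smul_eq_mul]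
    · linear_combination (-(A' 0 0)) * htr2 + hdet2
    · linear_combination (-(A' 0 1)) * htr2
    · linear_combination (-(A' 1 0)) * htr2
    · linear_combination (-(A' 1 1)) * htr2 + hdet2
  have hN2 : N * N = (μ - lam) • N := by
    have hsplit : A' - lam • (1 : Matrix (Fin 2) (Fin 2) (PowerSeries R))
        = (A' - μ • 1) + (μ - lam) • 1 := by
      rw [sub_smul μ lam (1 : Matrix (Fin 2) (Fin 2) (PowerSeries R)), sub_add_sub_cancel]
    calc N * N = N * ((A' - μ • 1) + (μ - lam) • 1) := by rw [← hsplit, ← hNdef]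
    _ = N * (A' - μ • 1) + N * ((μ - lam) • 1) := by rw [mul_add]
    _ = (μ - lam) • N := by rw [hNN, zero_add, mul_smul_comm, mul_one]
  set F := w • N with hFdef
  have hFF : F * F = F := by
    rw [hFdef, smul_mul_smul_comm, hN2, smul_smul, mul_assoc, hw, mul_one]
  set E := (1 : Matrix (Fin 2) (Fin 2) (PowerSeries R)) - F with hEdef
  have hEidem : IsIdempotentElem E := by
    rw [hEdef]
    exact (IsIdempotentElem.one_sub hFF)
  have hEE : E * E = E := hEidem
  have hNA : A' * N = N * A' := by
    rw [hNdef]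
    simp [mul_sub, sub_mul, mul_smul_comm, smul_mul_assoc]
  have hAF : A' * F = F * A' := by
    rw [hFdef, mul_smul_comm, smul_mul_assoc, hNA]
  have hAE : A' * E = E * A' := by
    rw [hEdef]
    simp [mul_sub, sub_mul, hAF]
  have hNE : N * E = 0 := by
    rw [hEdef, hFdef, mul_sub, mul_one, mul_smul_comm, hN2, smul_smul, hw, one_smul, sub_self]
  have hAE2 : A' * E = lam • E := by
    have h := hNE
    rw [hNdef, sub_mul, smul_mul_assoc, one_mul, sub_eq_zero] at h
    exact h
  have hEAE : E * A' * E = lam • E := by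
    have h1 : E * A' * E = A' * E * E := by rw [hAE]
    rw [h1, hAE2, smul_mul_assoc, hEE]
  have hEmap : π E = !![(1:R),0;0,0] := by
    rw [hEdef, hFdef, hNdef, hπ]
    ext i j
    fin_cases i <;> fin_cases j <;>
      simp [RingHom.mapMatrix_apply, Matrix.map_apply, Matrix.sub_apply, Matrix.smul_apply,
        Matrix.one_apply, smul_eq_mul, map_mul, map_sub, map_one, hlam0]
    · linear_combination (constantCoeff (R := R) w) * heq00
    · linear_combination (constantCoeff (R := R) w) * hB01'
    · linear_combination (constantCoeff (R := R) w) * hB10'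
    · linear_combination -hcw - constantCoeff (R := R) w * heq11
  have hAEu : IsUnit (A' - E) := by
    apply isUnit_lift
    have : (constantCoeff (R := R)).mapMatrix (A' - E) = B - !![(1:R),0;0,0] := by
      rw [map_sub, ← hπ, hEmap, hB]
    rw [this]
    exact huB
  refine ⟨E, hEidem, hAEu, hAE, ?_⟩
  intro Y
  have hzE : E * Y * E * E = E * Y * E := by
    rw [mul_assoc (E * Y), hEE]
  have hEz : E * (E * Y * E) = E * Y * E := by
    rw [← mul_assoc, ← mul_assoc, hEE]
  have hexpr : E - E * Y * E * (E * A' * E) = E - lam • (E * Y * E) := by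
    rw [hEAE, mul_smul_comm, hzE]
  have hu1 : IsUnit ((1 : Matrix (Fin 2) (Fin 2) (PowerSeries R)) - lam • (E * Y * E)) := by
    apply isUnit_lift
    set z : Matrix (Fin 2) (Fin 2) R := π (E * Y * E) with hz
    have hmap : (constantCoeff (R := R)).mapMatrix
        ((1 : Matrix (Fin 2) (Fin 2) (PowerSeries R)) - lam • (E * Y * E)) = 1 - α • z := by
      rw [mapMatrix_one_sub_smul, hlam0, hz, hπ]
    rw [hmap, Matrix.isUnit_iff_isUnit_det]
    have hdet : (1 - α • z).det =
        1 - α * (z 0 0 + z 1 1 - α * (z 0 0 * z 1 1) + α * (z 0 1 * z 1 0)) := by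
      rw [Matrix.det_fin_two]
      simp [Matrix.sub_apply, Matrix.smul_apply, Matrix.one_apply, smul_eq_mul]
      ring
    rw [hdet]
    refine unit_of_unit_of_nonunit_part
      (x := α * (z 0 0 + z 1 1 - α * (z 0 0 * z 1 1) + α * (z 0 1 * z 1 0))) ?_ ?_
    · have h : α * (z 0 0 + z 1 1 - α * (z 0 0 * z 1 1) + α * (z 0 1 * z 1 0)) +
          (1 - α * (z 0 0 + z 1 1 - α * (z 0 0 * z 1 1) + α * (z 0 1 * z 1 0))) = 1 := by ring
      rw [h]; exact isUnit_one
    · exact fun hcon => hα (isUnit_of_mul_isUnit_left hcon)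
  set u := hu1.unit with hu
  set uu : Matrix (Fin 2) (Fin 2) (PowerSeries R) := (↑u : Matrix (Fin 2) (Fin 2) (PowerSeries R)) with huu
  set uv : Matrix (Fin 2) (Fin 2) (PowerSeries R) := (↑u⁻¹ : Matrix (Fin 2) (Fin 2) (PowerSeries R)) with huv
  have hvu : uv * uu = 1 := u.inv_mul
  have huv1 : uu * uv = 1 := u.mul_inv
  have huuval : uu = (1 : Matrix (Fin 2) (Fin 2) (PowerSeries R)) - lam • (E * Y * E) := by
    rw [huu, hu, hu1.unit_spec]
  have hcomm_u : ((1 : Matrix (Fin 2) (Fin 2) (PowerSeries R)) - lam • (E * Y * E)) * E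
      = E * ((1 : Matrix (Fin 2) (Fin 2) (PowerSeries R)) - lam • (E * Y * E)) := by
    simp only [sub_mul, mul_sub, one_mul, mul_one, smul_mul_assoc, mul_smul_comm, hzE, hEz]
  have hEu : E * uu = uu * E := by
    rw [huuval]
    exact hcomm_u.symm
  have hEuv : E * uv = uv * E := by
    have hcE : Commute E (u : Matrix (Fin 2) (Fin 2) (PowerSeries R)) := hEu
    exact hcE.units_inv_right
  have huEeq : uu * E = E - lam • (E * Y * E) := by
    rw [huuval]
    simp only [sub_mul, one_mul, smul_mul_assoc, hzE]
  refine ⟨uv * E, ?_, ?_, ?_⟩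
  · calc E * (uv * E) * E = E * uv * (E * E) := by noncomm_ring
    _ = E * uv * E := by rw [hEE]
    _ = uv * E * E := by rw [hEuv]
    _ = uv * (E * E) := by noncomm_ring
    _ = uv * E := by rw [hEE]
  · rw [hexpr, ← huEeq]
    calc uv * E * (uu * E) = uv * (E * uu) * E := by noncomm_ring
    _ = uv * (uu * E) * E := by rw [hEu]
    _ = uv * uu * (E * E) := by noncomm_ring
    _ = E := by rw [hvu, hEE, one_mul]
  · rw [hexpr, ← huEeq]
    calc uu * E * (uv * E) = uu * (E * uv) * E := by noncomm_ring
    _ = uu * (uv * E) * E := by rw [hEuv]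
    _ = uu * uv * (E * E) := by noncomm_ring
    _ = E := by rw [huv1, hEE, one_mul]

end Local

theorem stmt18 {R : Type*} [CommRing R] [IsLocalRing R]
    (A : Matrix (Fin 2) (Fin 2) (PowerSeries R)) :
    IsStronglyRadClean A ↔ IsStronglyRadClean (A.map (PowerSeries.constantCoeff : PowerSeries R →+* R)) := by
  set π : Matrix (Fin 2) (Fin 2) (PowerSeries R) →+* Matrix (Fin 2) (Fin 2) R :=
    (constantCoeff (R := R)).mapMatrix with hπ
  have hπs : Function.Surjective π := by
    intro Bd
    refine ⟨Bd.map (PowerSeries.C (R := R)), ?_⟩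
    ext i j
    simp [hπ, RingHom.mapMatrix_apply, Matrix.map_apply]
  have hπA : π A = A.map (PowerSeries.constantCoeff (R := R)) := rfl
  constructor
  · intro h
    rw [← hπA]
    exact h.map π hπs
  · intro h
    rw [← hπA] at h
    obtain ⟨e0, he0, hu0, hc0, hj0⟩ := h
    by_cases h00 : e0 = 0
    · subst h00
      have hAu : IsUnit A := by
        apply isUnit_lift
        rw [sub_zero] at hu0; exact hu0
      refine ⟨0, by simp [IsIdempotentElem], by simpa using hAu, by simp, ?_⟩
      intro y
      exact ⟨0, by simp, by simp, by simp⟩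
    by_cases h01 : e0 = 1
    · subst h01
      have hAu : IsUnit (A - 1) := by
        apply isUnit_lift
        rw [map_sub, map_one]
        exact hu0
      refine ⟨1, by simp [IsIdempotentElem], hAu, by simp, ?_⟩
      intro Y
      obtain ⟨s0, hs1, hs2, hs3⟩ := hj0 (π Y)
      have hs2' : s0 * (1 - π Y * π A) = 1 := by simpa using hs2
      have hs3' : (1 - π Y * π A) * s0 = 1 := by simpa using hs3
      have hVu : IsUnit ((1 : Matrix (Fin 2) (Fin 2) (PowerSeries R)) - Y * A) := by
        apply isUnit_lift
        have hmap : (constantCoeff (R := R)).mapMatrix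
            ((1 : Matrix (Fin 2) (Fin 2) (PowerSeries R)) - Y * A) = 1 - π Y * π A := by
          rw [map_sub, map_one, map_mul, hπ]
        rw [hmap]
        exact ⟨⟨1 - π Y * π A, s0, hs3', hs2'⟩, rfl⟩
      refine ⟨↑hVu.unit⁻¹, by simp, ?_, ?_⟩
      · have h1 : (1 : Matrix (Fin 2) (Fin 2) (PowerSeries R)) - 1 * Y * 1 * (1 * A * 1)
            = 1 - Y * A := by noncomm_ring
        rw [h1]
        exact hVu.val_inv_mul
      · have h1 : (1 : Matrix (Fin 2) (Fin 2) (PowerSeries R)) - 1 * Y * 1 * (1 * A * 1)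
            = 1 - Y * A := by noncomm_ring
        rw [h1]
        exact hVu.mul_val_inv
    · obtain ⟨P, hP⟩ := idem_conj e0 he0 h00 h01
      have hPε : (↑P⁻¹ : Matrix (Fin 2) (Fin 2) R) * e0 * (↑P : Matrix (Fin 2) (Fin 2) R)
          = !![(1:R),0;0,0] := by
        rw [mul_assoc, hP, ← mul_assoc, P.inv_mul, one_mul]
      set Cm : Matrix (Fin 2) (Fin 2) R →+* Matrix (Fin 2) (Fin 2) (PowerSeries R) :=
        (PowerSeries.C (R := R)).mapMatrix with hCm
      set Ph : (Matrix (Fin 2) (Fin 2) (PowerSeries R))ˣ := Units.map Cm.toMonoidHom P with hPh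
      have hPhval : (↑Ph : Matrix (Fin 2) (Fin 2) (PowerSeries R)) = Cm ↑P := rfl
      have hPhinv : (↑Ph⁻¹ : Matrix (Fin 2) (Fin 2) (PowerSeries R)) = Cm ↑P⁻¹ := by
        rw [hPh, ← map_inv (Units.map Cm.toMonoidHom) P]
        rfl
      have hπC : ∀ X : Matrix (Fin 2) (Fin 2) R, π (Cm X) = X := by
        intro X
        ext i j
        simp [hπ, hCm, RingHom.mapMatrix_apply, Matrix.map_apply]
      set A' : Matrix (Fin 2) (Fin 2) (PowerSeries R) :=
        (↑Ph⁻¹ : Matrix (Fin 2) (Fin 2) (PowerSeries R)) * A *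
          (↑Ph : Matrix (Fin 2) (Fin 2) (PowerSeries R)) with hA'
      have hπA' : π A' = (↑P⁻¹ : Matrix (Fin 2) (Fin 2) R) * π A *
          (↑P : Matrix (Fin 2) (Fin 2) R) := by
        rw [hA', map_mul, map_mul, hPhval, hPhinv, hπC, hπC]
      have hφe : conjHom P⁻¹ e0 = !![(1:R),0;0,0] := by
        rw [conjHom_apply, inv_inv]
        exact hPε
      have hφa : conjHom P⁻¹ (π A) = π A' := by
        rw [conjHom_apply, inv_inv, hπA']
      have hcB : (π A') * !![(1:R),0;0,0] = !![(1:R),0;0,0] * (π A') := by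
        rw [← hφe, ← hφa, ← map_mul, ← map_mul, hc0]
      have huB : IsUnit (π A' - !![(1:R),0;0,0]) := by
        rw [← hφe, ← hφa, ← map_sub]
        exact hu0.map (conjHom P⁻¹)
      have hjB : MemCornerJacobson (!![(1:R),0;0,0])
          (!![(1:R),0;0,0] * (π A') * !![(1:R),0;0,0]) := by
        rw [← hφe, ← hφa, ← map_mul, ← map_mul]
        exact hj0.map _ (conjHom_surjective _)
      have hA'src : IsStronglyRadClean A' := main_case A' hcB huB hjB
      have hfin := hA'src.map (conjHom Ph) (conjHom_surjective Ph)
      have : conjHom Ph A' = A := by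
        rw [conjHom_apply, hA']
        have hmi : (↑Ph : Matrix (Fin 2) (Fin 2) (PowerSeries R)) *
            (↑Ph⁻¹ : Matrix (Fin 2) (Fin 2) (PowerSeries R)) = 1 := Ph.mul_inv
        calc (↑Ph : Matrix (Fin 2) (Fin 2) (PowerSeries R)) *
            ((↑Ph⁻¹ : Matrix (Fin 2) (Fin 2) (PowerSeries R)) * A *
              (↑Ph : Matrix (Fin 2) (Fin 2) (PowerSeries R))) *
            (↑Ph⁻¹ : Matrix (Fin 2) (Fin 2) (PowerSeries R))
            = ((↑Ph : Matrix (Fin 2) (Fin 2) (PowerSeries R)) *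
                (↑Ph⁻¹ : Matrix (Fin 2) (Fin 2) (PowerSeries R))) * A *
              ((↑Ph : Matrix (Fin 2) (Fin 2) (PowerSeries R)) *
                (↑Ph⁻¹ : Matrix (Fin 2) (Fin 2) (PowerSeries R))) := by noncomm_ring
        _ = A := by rw [hmi, one_mul, mul_one]
      rwa [this] at hfin
end

section
/- Let R be a commutative local ring such that for all λ ∈ J(R) and μ ∈ U(R) the equation x² + μx + λ = 0 is solvable in R. Then for all λ(x) ∈ J(R[[x]]) and μ(x) ∈ U(R[[x]]), the equation y² + μ(x)y + λ(x) = 0 has a solution y ∈ J(R[[x]]). -/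
open PowerSeries Polynomial

lemma mem_span_X_pow_iff {R : Type*} [CommRing R] (n : ℕ) (f : PowerSeries R) :
    f ∈ (Ideal.span {(PowerSeries.X : PowerSeries R)}) ^ n ↔
      ∀ m < n, PowerSeries.coeff m f = 0 := by
  rw [Ideal.span_singleton_pow, Ideal.mem_span_singleton, PowerSeries.X_pow_dvd_iff]

lemma smul_top_self {A : Type*} [CommRing A] (J : Ideal A) :
    J • (⊤ : Submodule A A) = J := by
  rw [Ideal.smul_top_eq_map, Algebra.algebraMap_self, Ideal.map_id]; rfl

instance instAdicCompletePS {R : Type*} [CommRing R] :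
    IsAdicComplete (Ideal.span {(PowerSeries.X : PowerSeries R)}) (PowerSeries R) := by
  refine { toIsHausdorff := ⟨?_⟩, toIsPrecomplete := ⟨?_⟩ }
  · intro f hf
    ext n
    have := hf (n + 1)
    rw [SModEq.zero, smul_top_self, mem_span_X_pow_iff] at this
    simpa using this n (Nat.lt_succ_self n)
  · intro f hf
    refine ⟨PowerSeries.mk fun k => PowerSeries.coeff k (f (k + 1)), fun n => ?_⟩
    rw [SModEq.sub_mem, smul_top_self, mem_span_X_pow_iff]
    intro k hk
    have h2 := SModEq.sub_mem.mp (hf (show k + 1 ≤ n from hk))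
    rw [smul_top_self, mem_span_X_pow_iff] at h2
    have hck : PowerSeries.coeff k (f (k + 1) - f n) = 0 :=
      h2 k (Nat.lt_succ_self k)
    simp only [map_sub, PowerSeries.coeff_mk]
    rw [map_sub] at hck
    linear_combination -hck

theorem stmt19 {R : Type*} [CommRing R] [IsLocalRing R]
    (h : ∀ lam ∈ Ideal.jacobson (⊥ : Ideal R), ∀ mu : R, IsUnit mu →
      ∃ x : R, x ^ 2 + mu * x + lam = 0)
    (l : PowerSeries R) (hl : l ∈ Ideal.jacobson (⊥ : Ideal (PowerSeries R)))
    (m : PowerSeries R) (hm : IsUnit m) :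
    ∃ y ∈ Ideal.jacobson (⊥ : Ideal (PowerSeries R)), y ^ 2 + m * y + l = 0 := by
  have hJR : Ideal.jacobson (⊥ : Ideal R) = IsLocalRing.maximalIdeal R :=
    IsLocalRing.jacobson_eq_maximalIdeal ⊥ bot_ne_top
  have hJps : Ideal.jacobson (⊥ : Ideal (PowerSeries R)) =
      IsLocalRing.maximalIdeal (PowerSeries R) :=
    IsLocalRing.jacobson_eq_maximalIdeal ⊥ bot_ne_top
  rw [hJps] at hl ⊢
  set lam0 := PowerSeries.constantCoeff l with hlam0
  set mu0 := PowerSeries.constantCoeff m with hmu0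
  have hmu0u : IsUnit mu0 := hm.map (PowerSeries.constantCoeff)
  have hlam0m : lam0 ∈ IsLocalRing.maximalIdeal R := by
    rw [IsLocalRing.mem_maximalIdeal, mem_nonunits_iff] at hl ⊢
    exact fun hu => hl (PowerSeries.isUnit_iff_constantCoeff.mpr hu)
  obtain ⟨x0, hx0⟩ := h lam0 (hJR ▸ hlam0m) mu0 hmu0u
  -- find a root `a` in the maximal ideal of R
  obtain ⟨a, haroot, hamem⟩ :
      ∃ a : R, a ^ 2 + mu0 * a + lam0 = 0 ∧ a ∈ IsLocalRing.maximalIdeal R := by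
    by_cases hx0u : IsUnit x0
    · refine ⟨-mu0 - x0, by linear_combination hx0, ?_⟩
      have hprod : x0 * (x0 + mu0) ∈ IsLocalRing.maximalIdeal R := by
        have : x0 * (x0 + mu0) = -lam0 := by linear_combination hx0
        rw [this]
        exact neg_mem hlam0m
      have hprime := (IsLocalRing.maximalIdeal.isMaximal R).isPrime
      rcases hprime.mem_or_mem hprod with h1 | h2
      · exact absurd hx0u ((IsLocalRing.mem_maximalIdeal _).mp h1)
      · have : -mu0 - x0 = -(x0 + mu0) := by ring
        rw [this]
        exact neg_mem h2
    · exact ⟨x0, hx0, (IsLocalRing.mem_maximalIdeal _).mpr hx0u⟩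
  -- Hensel lift in R⟦X⟧ with respect to the ideal (X)
  set I : Ideal (PowerSeries R) := Ideal.span {PowerSeries.X} with hI
  haveI : HenselianRing (PowerSeries R) I := IsAdicComplete.henselianRing _ I
  set F : Polynomial (PowerSeries R) :=
    Polynomial.X ^ 2 + (Polynomial.C m * Polynomial.X + Polynomial.C l) with hF
  have hmonic : F.Monic := by
    apply Polynomial.monic_X_pow_add
    exact lt_of_le_of_lt (Polynomial.degree_linear_le) (by norm_num)
  have heval : F.eval (PowerSeries.C a) ∈ I := by
    rw [hI, Ideal.mem_span_singleton, PowerSeries.X_dvd_iff]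
    simp only [hF, Polynomial.eval_add, Polynomial.eval_pow, Polynomial.eval_mul,
      Polynomial.eval_X, Polynomial.eval_C, map_add, map_pow, map_mul,
      PowerSeries.constantCoeff_C]
    rw [← hmu0, ← hlam0]
    linear_combination haroot
  have hderivu : IsUnit (F.derivative.eval (PowerSeries.C a)) := by
    have hval : F.derivative.eval (PowerSeries.C a) =
        2 * PowerSeries.C a + m := by
      simp [hF]; ring
    rw [hval, PowerSeries.isUnit_iff_constantCoeff]
    simp only [map_add, map_mul, map_ofNat, PowerSeries.constantCoeff_C]
    by_contra hnu
    have hmem : 2 * a + mu0 ∈ IsLocalRing.maximalIdeal R :=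
      (IsLocalRing.mem_maximalIdeal _).mpr hnu
    have : mu0 ∈ IsLocalRing.maximalIdeal R := by
      have := sub_mem hmem (Ideal.mul_mem_left _ 2 hamem)
      simpa using this
    exact ((IsLocalRing.mem_maximalIdeal _).mp this) hmu0u
  obtain ⟨y, hyroot, hysub⟩ := HenselianRing.is_henselian F hmonic (PowerSeries.C a)
    heval (hderivu.map (Ideal.Quotient.mk I))
  refine ⟨y, ?_, ?_⟩
  · rw [IsLocalRing.mem_maximalIdeal, mem_nonunits_iff]
    intro hyu
    have hconst : PowerSeries.constantCoeff y = a := by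
      rw [hI, Ideal.mem_span_singleton, PowerSeries.X_dvd_iff, map_sub,
        PowerSeries.constantCoeff_C, sub_eq_zero] at hysub
      exact hysub
    have := PowerSeries.isUnit_constantCoeff y hyu
    rw [hconst] at this
    exact ((IsLocalRing.mem_maximalIdeal _).mp hamem) this
  · have := hyroot
    simp only [hF, Polynomial.IsRoot, Polynomial.eval_add, Polynomial.eval_pow,
      Polynomial.eval_mul, Polynomial.eval_X, Polynomial.eval_C] at this
    linear_combination this
end
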